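/- Let A = H*(V,ℂ) for V = ℙ(𝒪_{ℙ³} ⊕ 𝒪_{ℙ³}(−4)), with basis Γ₀ = 1, Γ₁, Δ₀, Γ₂, Δ₁, Γ₃, Δ₂, Δ₃ and products Γ_i∪Γ_j = Γ_{i+j} (i+j ≤ 3, else 0), Δ_i∪Γ_j = Δ_{i+j} (i+j ≤ 3, else 0), Δ_i∪Δ_j = 4Δ_{i+j+1} (i+j < 3, else 0). Then Δ₀ is nilpotent of order 5 (Δ₀^{∪4} = 4³Δ₃ ≠ 0, Δ₀^{∪5} = 0), and the kernels J_k = Ker(Δ₀^{∪k}∪·) are: J₁ = ℂΓ₃^∨ ⊕ ℂΓ₂^∨ ⊕ ℂΓ₁^∨ ⊕ ℂΔ₃, J₂ = ℂΓ₃^∨ ⊕ ℂΓ₂^∨ ⊕ H^{≥6}(V), J₃ = ℂΓ₃^∨ ⊕ H^{≥4}(V), J₄ = H^{≥2}(V), J₅ = A, where Γ_k^∨ = Δ_{3−k} − 4Γ_{4−k}. Hence I₀ = (Δ₀), I₁ = ⋯ = I₄ = H^{≥2}(V), I₅ = A. -/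

import Mathlib

/-- in `A = H*(V,ℂ)` for `V = ℙ(𝒪_{ℙ³} ⊕ 𝒪_{ℙ³}(−4))` (with basis
`Γ₀,Γ₁,Δ₀,Γ₂,Δ₁,Γ₃,Δ₂,Δ₃` and the listed products), `Δ₀` is nilpotent of order
`5`, the kernels `J_k = Ker(Δ₀^k ∪ ·)` are as listed, and hence
`I₀ = (Δ₀)`, `I₁ = ⋯ = I₄ = H^{≥2}(V)`, `I₅ = A`. -/
theorem stmt17 {A : Type*} [CommRing A] [Algebra ℂ A]
    (G Dl : ℕ → A)
    (hone : G 0 = 1)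
    (hGG : ∀ i j : ℕ, i + j ≤ 3 → G i * G j = G (i + j))
    (hGG0 : ∀ i j : ℕ, i ≤ 3 → j ≤ 3 → 3 < i + j → G i * G j = 0)
    (hDG : ∀ i j : ℕ, i + j ≤ 3 → Dl i * G j = Dl (i + j))
    (hDG0 : ∀ i j : ℕ, i ≤ 3 → j ≤ 3 → 3 < i + j → Dl i * G j = 0)
    (hDD : ∀ i j : ℕ, i ≤ 3 → j ≤ 3 → i + j < 3 → Dl i * Dl j = (4 : ℂ) • Dl (i + j + 1))
    (hDD0 : ∀ i j : ℕ, i ≤ 3 → j ≤ 3 → 3 ≤ i + j → Dl i * Dl j = 0)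
    (bA : Module.Basis (Fin 8) ℂ A)
    (hbA : ∀ u : Fin 8,
      bA u = ![G 0, G 1, Dl 0, G 2, Dl 1, G 3, Dl 2, Dl 3] u) :
    let Gd : ℕ → A := fun k => Dl (3 - k) - (4 : ℂ) • G (4 - k)   -- Γ_k^∨
    let J : ℕ → Submodule ℂ A := fun k => LinearMap.ker (LinearMap.mulRight ℂ (Dl 0 ^ k))
    let I0 : Submodule ℂ A := LinearMap.range (LinearMap.mulRight ℂ (Dl 0))
    let Hge2 : Submodule ℂ A :=
      Submodule.span ℂ {G 1, Dl 0, G 2, Dl 1, G 3, Dl 2, Dl 3}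
    -- Δ₀ is nilpotent of order 5
    (Dl 0 ^ 5 = 0 ∧ Dl 0 ^ 4 = ((4 : ℂ) ^ 3) • Dl 3 ∧ Dl 0 ^ 4 ≠ 0) ∧
    -- the kernels J_k
    (J 1 = Submodule.span ℂ {Gd 3, Gd 2, Gd 1, Dl 3}) ∧
    (J 2 = Submodule.span ℂ {Gd 3, Gd 2, G 3, Dl 2, Dl 3}) ∧
    (J 3 = Submodule.span ℂ {Gd 3, G 2, Dl 1, G 3, Dl 2, Dl 3}) ∧
    (J 4 = Hge2) ∧
    (J 5 = ⊤) ∧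
    -- hence I₁ = ⋯ = I₄ = H^{≥2}(V) and I₅ = A
    (∀ k : ℕ, 1 ≤ k → k ≤ 4 → I0 ⊔ J k = Hge2) ∧
    (I0 ⊔ J 5 = ⊤) := by
  intro Gd J I0 Hge2
  -- product lemmas, oriented as needed
  have gd' : ∀ i j, i + j ≤ 3 → G j * Dl i = Dl (i + j) := fun i j h => by
    rw [mul_comm]; exact hDG i j h
  have gd0' : ∀ i j, i ≤ 3 → j ≤ 3 → 3 < i + j → G j * Dl i = 0 := fun i j h1 h2 h3 => by
    rw [mul_comm]; exact hDG0 i j h1 h2 h3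
  have g0d0 : G 0 * Dl 0 = Dl 0 := by simpa using gd' 0 0 (by norm_num)
  have g1d0 : G 1 * Dl 0 = Dl 1 := by simpa using gd' 0 1 (by norm_num)
  have g2d0 : G 2 * Dl 0 = Dl 2 := by simpa using gd' 0 2 (by norm_num)
  have g3d0 : G 3 * Dl 0 = Dl 3 := by simpa using gd' 0 3 (by norm_num)
  have d0d0 : Dl 0 * Dl 0 = (4 : ℂ) • Dl 1 := by
    simpa using hDD 0 0 (by norm_num) (by norm_num) (by norm_num)
  have d1d0 : Dl 1 * Dl 0 = (4 : ℂ) • Dl 2 := by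
    simpa using hDD 1 0 (by norm_num) (by norm_num) (by norm_num)
  have d2d0 : Dl 2 * Dl 0 = (4 : ℂ) • Dl 3 := by
    simpa using hDD 2 0 (by norm_num) (by norm_num) (by norm_num)
  have d3d0 : Dl 3 * Dl 0 = 0 := hDD0 3 0 (by norm_num) (by norm_num) (by norm_num)
  have g0d1 : G 0 * Dl 1 = Dl 1 := by simpa using gd' 1 0 (by norm_num)
  have g1d1 : G 1 * Dl 1 = Dl 2 := by simpa using gd' 1 1 (by norm_num)
  have g2d1 : G 2 * Dl 1 = Dl 3 := by simpa using gd' 1 2 (by norm_num)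
  have g3d1 : G 3 * Dl 1 = 0 := gd0' 1 3 (by norm_num) (by norm_num) (by norm_num)
  have d0d1 : Dl 0 * Dl 1 = (4 : ℂ) • Dl 2 := by
    simpa using hDD 0 1 (by norm_num) (by norm_num) (by norm_num)
  have d1d1 : Dl 1 * Dl 1 = (4 : ℂ) • Dl 3 := by
    simpa using hDD 1 1 (by norm_num) (by norm_num) (by norm_num)
  have d2d1 : Dl 2 * Dl 1 = 0 := hDD0 2 1 (by norm_num) (by norm_num) (by norm_num)
  have d3d1 : Dl 3 * Dl 1 = 0 := hDD0 3 1 (by norm_num) (by norm_num) (by norm_num)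
  have g0d2 : G 0 * Dl 2 = Dl 2 := by simpa using gd' 2 0 (by norm_num)
  have g1d2 : G 1 * Dl 2 = Dl 3 := by simpa using gd' 2 1 (by norm_num)
  have g2d2 : G 2 * Dl 2 = 0 := gd0' 2 2 (by norm_num) (by norm_num) (by norm_num)
  have g3d2 : G 3 * Dl 2 = 0 := gd0' 2 3 (by norm_num) (by norm_num) (by norm_num)
  have d0d2 : Dl 0 * Dl 2 = (4 : ℂ) • Dl 3 := by
    simpa using hDD 0 2 (by norm_num) (by norm_num) (by norm_num)
  have d1d2 : Dl 1 * Dl 2 = 0 := hDD0 1 2 (by norm_num) (by norm_num) (by norm_num)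
  have d2d2 : Dl 2 * Dl 2 = 0 := hDD0 2 2 (by norm_num) (by norm_num) (by norm_num)
  have d3d2 : Dl 3 * Dl 2 = 0 := hDD0 3 2 (by norm_num) (by norm_num) (by norm_num)
  have g0d3 : G 0 * Dl 3 = Dl 3 := by simpa using gd' 3 0 (by norm_num)
  have g1d3 : G 1 * Dl 3 = 0 := gd0' 3 1 (by norm_num) (by norm_num) (by norm_num)
  have g2d3 : G 2 * Dl 3 = 0 := gd0' 3 2 (by norm_num) (by norm_num) (by norm_num)
  have g3d3 : G 3 * Dl 3 = 0 := gd0' 3 3 (by norm_num) (by norm_num) (by norm_num)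
  have d0d3 : Dl 0 * Dl 3 = 0 := hDD0 0 3 (by norm_num) (by norm_num) (by norm_num)
  have d1d3 : Dl 1 * Dl 3 = 0 := hDD0 1 3 (by norm_num) (by norm_num) (by norm_num)
  have d2d3 : Dl 2 * Dl 3 = 0 := hDD0 2 3 (by norm_num) (by norm_num) (by norm_num)
  have d3d3 : Dl 3 * Dl 3 = 0 := hDD0 3 3 (by norm_num) (by norm_num) (by norm_num)
  -- powers of Dl 0
  have p2 : Dl 0 ^ 2 = (4 : ℂ) • Dl 1 := by rw [sq, d0d0]
  have p3 : Dl 0 ^ 3 = (16 : ℂ) • Dl 2 := by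
    rw [pow_succ, p2, smul_mul_assoc, d1d0, smul_smul]; norm_num
  have p4 : Dl 0 ^ 4 = (64 : ℂ) • Dl 3 := by
    rw [pow_succ, p3, smul_mul_assoc, d2d0, smul_smul]; norm_num
  have p5 : Dl 0 ^ 5 = 0 := by rw [pow_succ, p4, smul_mul_assoc, d3d0, smul_zero]
  have hb7 : bA 7 = Dl 3 := hbA 7
  have hDl3ne : Dl 3 ≠ 0 := hb7 ▸ bA.ne_zero 7
  have p4ne : Dl 0 ^ 4 ≠ 0 := by
    rw [p4]
    intro h
    rcases smul_eq_zero.mp h with h | h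
    · norm_num at h
    · exact hDl3ne h
  have p4stmt : Dl 0 ^ 4 = ((4 : ℂ) ^ 3) • Dl 3 := by rw [p4]; norm_num
  -- linear independence of the Dl's
  have li := Fintype.linearIndependent_iff.mp bA.linearIndependent
  have indepD : ∀ a b c d : ℂ,
      a • Dl 0 + b • Dl 1 + c • Dl 2 + d • Dl 3 = 0 → a = 0 ∧ b = 0 ∧ c = 0 ∧ d = 0 := by
    intro a b c d h
    have h8 : ∑ u : Fin 8, (![0, 0, a, 0, b, 0, c, d] : Fin 8 → ℂ) u • bA u = 0 := by
      simp only [Fin.sum_univ_eight, hbA]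
      show (0:ℂ) • G 0 + (0:ℂ) • G 1 + a • Dl 0 + (0:ℂ) • G 2 + b • Dl 1 + (0:ℂ) • G 3
        + c • Dl 2 + d • Dl 3 = 0
      simpa using h
    have hz := li _ h8
    exact ⟨hz 2, hz 4, hz 6, hz 7⟩
  -- decomposition in the basis
  have decomp : ∀ x : A, ∃ c : Fin 8 → ℂ,
      x = c 0 • G 0 + c 1 • G 1 + c 2 • Dl 0 + c 3 • G 2 + c 4 • Dl 1 + c 5 • G 3
        + c 6 • Dl 2 + c 7 • Dl 3 := by
    intro x
    refine ⟨fun u => bA.repr x u, ?_⟩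
    have h := bA.sum_repr x
    simp only [Fin.sum_univ_eight, hbA] at h
    exact h.symm
  -- unfolding Gd
  have gd3e : Gd 3 = Dl 0 - (4 : ℂ) • G 1 := rfl
  have gd2e : Gd 2 = Dl 1 - (4 : ℂ) • G 2 := rfl
  have gd1e : Gd 1 = Dl 2 - (4 : ℂ) • G 3 := rfl
  -- membership characterizations
  have memJ : ∀ (k : ℕ) (z : A), z ∈ J k ↔ z * Dl 0 ^ k = 0 := by
    intro k z
    rw [show J k = LinearMap.ker (LinearMap.mulRight ℂ (Dl 0 ^ k)) from rfl,
      LinearMap.mem_ker, LinearMap.mulRight_apply]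
  have memI0 : ∀ z : A, z ∈ I0 ↔ ∃ y, y * Dl 0 = z := by
    intro z
    rw [show I0 = LinearMap.range (LinearMap.mulRight ℂ (Dl 0)) from rfl, LinearMap.mem_range]
    simp only [LinearMap.mulRight_apply]
  -- kernel J 1
  have hGd3J1 : Gd 3 ∈ J 1 := (memJ 1 _).mpr (by
    rw [pow_one, gd3e, sub_mul, smul_mul_assoc, d0d0, g1d0, sub_self])
  have hGd2J1 : Gd 2 ∈ J 1 := (memJ 1 _).mpr (by
    rw [pow_one, gd2e, sub_mul, smul_mul_assoc, d1d0, g2d0, sub_self])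
  have hGd1J1 : Gd 1 ∈ J 1 := (memJ 1 _).mpr (by
    rw [pow_one, gd1e, sub_mul, smul_mul_assoc, d2d0, g3d0, sub_self])
  have hDl3J1 : Dl 3 ∈ J 1 := (memJ 1 _).mpr (by rw [pow_one, d3d0])
  have hJ1 : J 1 = Submodule.span ℂ {Gd 3, Gd 2, Gd 1, Dl 3} := by
    apply le_antisymm
    · intro x hx
      rw [memJ 1 x, pow_one] at hx
      obtain ⟨c, hc⟩ := decomp x
      have hm : x * Dl 0 = c 0 • Dl 0 + (c 1 + 4 * c 2) • Dl 1 + (c 3 + 4 * c 4) • Dl 2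
          + (c 5 + 4 * c 6) • Dl 3 := by
        rw [hc]
        simp only [add_mul, smul_mul_assoc, g0d0, g1d0, g2d0, g3d0, d0d0, d1d0, d2d0, d3d0]
        module
      rw [hm] at hx
      obtain ⟨h0, h1, h2, h3⟩ := indepD _ _ _ _ hx
      have e1 : c 1 = -(4 * c 2) := by linear_combination h1
      have e2 : c 3 = -(4 * c 4) := by linear_combination h2
      have e3 : c 5 = -(4 * c 6) := by linear_combination h3
      have hxe : x = c 2 • Gd 3 + c 4 • Gd 2 + c 6 • Gd 1 + c 7 • Dl 3 := by
        rw [hc, gd3e, gd2e, gd1e, h0, e1, e2, e3]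
        module
      rw [hxe]
      refine add_mem (add_mem (add_mem ?_ ?_) ?_) ?_ <;>
        exact Submodule.smul_mem _ _ (Submodule.subset_span (by simp))
    · show Submodule.span ℂ ({Gd 3, Gd 2, Gd 1, Dl 3} : Set A) ≤ J 1
      rw [Submodule.span_le]
      rintro y hy
      simp only [Set.mem_insert_iff, Set.mem_singleton_iff] at hy
      rcases hy with rfl | rfl | rfl | rfl
      exacts [hGd3J1, hGd2J1, hGd1J1, hDl3J1]
  -- kernel J 2
  have toJ2 : ∀ z : A, z * Dl 1 = 0 → z ∈ J 2 := fun z hz => (memJ 2 z).mpr (by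
    rw [p2, mul_smul_comm, hz, smul_zero])
  have hJ2 : J 2 = Submodule.span ℂ {Gd 3, Gd 2, G 3, Dl 2, Dl 3} := by
    apply le_antisymm
    · intro x hx
      rw [memJ 2 x, p2, mul_smul_comm] at hx
      have hx1 : x * Dl 1 = 0 := (smul_eq_zero.mp hx).resolve_left (by norm_num)
      obtain ⟨c, hc⟩ := decomp x
      have hm : x * Dl 1 = c 0 • Dl 1 + (c 1 + 4 * c 2) • Dl 2 + (c 3 + 4 * c 4) • Dl 3 := by
        rw [hc]
        simp only [add_mul, smul_mul_assoc, g0d1, g1d1, g2d1, g3d1, d0d1, d1d1, d2d1, d3d1,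
          smul_zero]
        module
      have h := indepD 0 (c 0) (c 1 + 4 * c 2) (c 3 + 4 * c 4) (by
        simp only [zero_smul, zero_add]
        rw [← hm]; exact hx1)
      obtain ⟨-, h0, h1, h2⟩ := h
      have e1 : c 1 = -(4 * c 2) := by linear_combination h1
      have e2 : c 3 = -(4 * c 4) := by linear_combination h2
      have hxe : x = c 2 • Gd 3 + c 4 • Gd 2 + c 5 • G 3 + c 6 • Dl 2 + c 7 • Dl 3 := by
        rw [hc, gd3e, gd2e, h0, e1, e2]
        module
      rw [hxe]
      refine add_mem (add_mem (add_mem (add_mem ?_ ?_) ?_) ?_) ?_ <;>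
        exact Submodule.smul_mem _ _ (Submodule.subset_span (by simp))
    · show Submodule.span ℂ ({Gd 3, Gd 2, G 3, Dl 2, Dl 3} : Set A) ≤ J 2
      rw [Submodule.span_le]
      rintro y hy
      simp only [Set.mem_insert_iff, Set.mem_singleton_iff] at hy
      rcases hy with rfl | rfl | rfl | rfl | rfl
      · exact toJ2 _ (by rw [gd3e, sub_mul, smul_mul_assoc, d0d1, g1d1, sub_self])
      · exact toJ2 _ (by rw [gd2e, sub_mul, smul_mul_assoc, d1d1, g2d1, sub_self])
      · exact toJ2 _ g3d1
      · exact toJ2 _ d2d1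
      · exact toJ2 _ d3d1
  -- kernel J 3
  have toJ3 : ∀ z : A, z * Dl 2 = 0 → z ∈ J 3 := fun z hz => (memJ 3 z).mpr (by
    rw [p3, mul_smul_comm, hz, smul_zero])
  have hJ3 : J 3 = Submodule.span ℂ {Gd 3, G 2, Dl 1, G 3, Dl 2, Dl 3} := by
    apply le_antisymm
    · intro x hx
      rw [memJ 3 x, p3, mul_smul_comm] at hx
      have hx1 : x * Dl 2 = 0 := (smul_eq_zero.mp hx).resolve_left (by norm_num)
      obtain ⟨c, hc⟩ := decomp x
      have hm : x * Dl 2 = c 0 • Dl 2 + (c 1 + 4 * c 2) • Dl 3 := by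
        rw [hc]
        simp only [add_mul, smul_mul_assoc, g0d2, g1d2, g2d2, g3d2, d0d2, d1d2, d2d2, d3d2,
          smul_zero]
        module
      have h := indepD 0 0 (c 0) (c 1 + 4 * c 2) (by
        simp only [zero_smul, zero_add]
        rw [← hm]; exact hx1)
      obtain ⟨-, -, h0, h1⟩ := h
      have e1 : c 1 = -(4 * c 2) := by linear_combination h1
      have hxe : x = c 2 • Gd 3 + c 3 • G 2 + c 4 • Dl 1 + c 5 • G 3 + c 6 • Dl 2
          + c 7 • Dl 3 := by
        rw [hc, gd3e, h0, e1]
        module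
      rw [hxe]
      refine add_mem (add_mem (add_mem (add_mem (add_mem ?_ ?_) ?_) ?_) ?_) ?_ <;>
        exact Submodule.smul_mem _ _ (Submodule.subset_span (by simp))
    · show Submodule.span ℂ ({Gd 3, G 2, Dl 1, G 3, Dl 2, Dl 3} : Set A) ≤ J 3
      rw [Submodule.span_le]
      rintro y hy
      simp only [Set.mem_insert_iff, Set.mem_singleton_iff] at hy
      rcases hy with rfl | rfl | rfl | rfl | rfl | rfl
      · exact toJ3 _ (by rw [gd3e, sub_mul, smul_mul_assoc, d0d2, g1d2, sub_self])
      · exact toJ3 _ g2d2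
      · exact toJ3 _ d1d2
      · exact toJ3 _ g3d2
      · exact toJ3 _ d2d2
      · exact toJ3 _ d3d2
  -- kernel J 4
  have toJ4 : ∀ z : A, z * Dl 3 = 0 → z ∈ J 4 := fun z hz => (memJ 4 z).mpr (by
    rw [p4, mul_smul_comm, hz, smul_zero])
  have hJ4 : J 4 = Hge2 := by
    apply le_antisymm
    · intro x hx
      rw [memJ 4 x, p4, mul_smul_comm] at hx
      have hx1 : x * Dl 3 = 0 := (smul_eq_zero.mp hx).resolve_left (by norm_num)
      obtain ⟨c, hc⟩ := decomp x
      have hm : x * Dl 3 = c 0 • Dl 3 := by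
        rw [hc]
        simp only [add_mul, smul_mul_assoc, g0d3, g1d3, g2d3, g3d3, d0d3, d1d3, d2d3, d3d3,
          smul_zero]
        module
      have h := indepD 0 0 0 (c 0) (by
        simp only [zero_smul, zero_add]
        rw [← hm]; exact hx1)
      have h0 : c 0 = 0 := h.2.2.2
      have hxe : x = c 1 • G 1 + c 2 • Dl 0 + c 3 • G 2 + c 4 • Dl 1 + c 5 • G 3
          + c 6 • Dl 2 + c 7 • Dl 3 := by
        rw [hc, h0]
        module
      rw [hxe]
      refine add_mem (add_mem (add_mem (add_mem (add_mem (add_mem ?_ ?_) ?_) ?_) ?_) ?_) ?_ <;>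
        exact Submodule.smul_mem _ _ (Submodule.subset_span (by simp))
    · show Submodule.span ℂ ({G 1, Dl 0, G 2, Dl 1, G 3, Dl 2, Dl 3} : Set A) ≤ J 4
      rw [Submodule.span_le]
      rintro y hy
      simp only [Set.mem_insert_iff, Set.mem_singleton_iff] at hy
      rcases hy with rfl | rfl | rfl | rfl | rfl | rfl | rfl
      exacts [toJ4 _ g1d3, toJ4 _ d0d3, toJ4 _ g2d3, toJ4 _ d1d3, toJ4 _ g3d3,
        toJ4 _ d2d3, toJ4 _ d3d3]
  -- J 5 = ⊤
  have hJ5 : J 5 = ⊤ := by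
    rw [eq_top_iff]
    intro x _
    rw [memJ 5 x, p5, mul_zero]
  -- monotonicity J 1 ≤ J k for k ≥ 1
  have Jmono : ∀ k : ℕ, 1 ≤ k → J 1 ≤ J k := by
    intro k hk x hx
    rw [memJ 1 x, pow_one] at hx
    rw [memJ k x, show k = 1 + (k - 1) from by omega, pow_add, pow_one, ← mul_assoc, hx,
      zero_mul]
  -- I0 ≤ J 4
  have hI0le : I0 ≤ J 4 := by
    intro z hz
    obtain ⟨y, rfl⟩ := (memI0 z).mp hz
    have hd : Dl 0 * Dl 0 ^ 4 = 0 := by rw [p4, mul_smul_comm, d0d3, smul_zero]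
    rw [memJ 4, mul_assoc, hd, mul_zero]
  -- Hge2 ≤ I0 ⊔ J 1
  have hDl0I : Dl 0 ∈ I0 := (memI0 _).mpr ⟨G 0, g0d0⟩
  have hDl1I : Dl 1 ∈ I0 := (memI0 _).mpr ⟨G 1, g1d0⟩
  have hDl2I : Dl 2 ∈ I0 := (memI0 _).mpr ⟨G 2, g2d0⟩
  have hDl3I : Dl 3 ∈ I0 := (memI0 _).mpr ⟨G 3, g3d0⟩
  have hsubH : Hge2 ≤ I0 ⊔ J 1 := by
    show Submodule.span ℂ ({G 1, Dl 0, G 2, Dl 1, G 3, Dl 2, Dl 3} : Set A) ≤ I0 ⊔ J 1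
    rw [Submodule.span_le]
    rintro y hy
    simp only [Set.mem_insert_iff, Set.mem_singleton_iff] at hy
    rcases hy with rfl | rfl | rfl | rfl | rfl | rfl | rfl
    · have e : G 1 = (4⁻¹ : ℂ) • (Dl 0 - Gd 3) := by
        rw [gd3e, sub_sub_cancel, smul_smul]; norm_num
      rw [SetLike.mem_coe, e]
      exact Submodule.smul_mem _ _ (Submodule.sub_mem _ (Submodule.mem_sup_left hDl0I)
        (Submodule.mem_sup_right hGd3J1))
    · exact Submodule.mem_sup_left hDl0I
    · have e : G 2 = (4⁻¹ : ℂ) • (Dl 1 - Gd 2) := by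
        rw [gd2e, sub_sub_cancel, smul_smul]; norm_num
      rw [SetLike.mem_coe, e]
      exact Submodule.smul_mem _ _ (Submodule.sub_mem _ (Submodule.mem_sup_left hDl1I)
        (Submodule.mem_sup_right hGd2J1))
    · exact Submodule.mem_sup_left hDl1I
    · have e : G 3 = (4⁻¹ : ℂ) • (Dl 2 - Gd 1) := by
        rw [gd1e, sub_sub_cancel, smul_smul]; norm_num
      rw [SetLike.mem_coe, e]
      exact Submodule.smul_mem _ _ (Submodule.sub_mem _ (Submodule.mem_sup_left hDl2I)
        (Submodule.mem_sup_right hGd1J1))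
    · exact Submodule.mem_sup_left hDl2I
    · exact Submodule.mem_sup_left hDl3I
  -- I0 ⊔ J k = Hge2 for 1 ≤ k ≤ 4
  have hIJ : ∀ k : ℕ, 1 ≤ k → k ≤ 4 → I0 ⊔ J k = Hge2 := by
    intro k h1 h4
    apply le_antisymm
    · apply sup_le
      · exact hI0le.trans (le_of_eq hJ4)
      · have hk4 : J k ≤ J 4 := by
          intro x hx
          rw [memJ k x] at hx
          rw [memJ 4 x, show (4 : ℕ) = k + (4 - k) from by omega, pow_add, ← mul_assoc, hx,
            zero_mul]
        exact hk4.trans (le_of_eq hJ4)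
    · exact hsubH.trans (sup_le_sup_left (Jmono k h1) I0)
  have hI5 : I0 ⊔ J 5 = ⊤ := by rw [hJ5, sup_top_eq]
  exact ⟨⟨p5, p4stmt, p4ne⟩, hJ1, hJ2, hJ3, hJ4, hJ5, hIJ, hI5⟩
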